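/- Let M ≥ 2 and let α = cos(π/M). Then for every r ∈ {0,...,M-1} and n ≥ 1, |(Σ_{k ≡ r mod M, 0 ≤ k ≤ n} C(n,k))/2^n − 1/M| ≤ ((M−1)/M) · α^n. -/

import Mathlib

open Finset Real

private lemma abs_one_add_exp_aux (θ : ℝ) :
    ‖1 + Complex.exp ((θ : ℂ) * Complex.I)‖ = 2 * |Real.cos (θ / 2)| := by
  have h : (1 : ℂ) + Complex.exp ((θ : ℂ) * Complex.I)
      = Complex.exp (((θ / 2 : ℝ) : ℂ) * Complex.I) * (2 * Complex.cos ((θ / 2 : ℝ) : ℂ)) := by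
    rw [Complex.two_cos, mul_add, ← Complex.exp_add, ← Complex.exp_add]
    have h1 : ((θ / 2 : ℝ) : ℂ) * Complex.I + ((θ / 2 : ℝ) : ℂ) * Complex.I
        = (θ : ℂ) * Complex.I := by push_cast; ring
    have h2 : ((θ / 2 : ℝ) : ℂ) * Complex.I + -((θ / 2 : ℝ) : ℂ) * Complex.I = 0 := by ring
    rw [h1, h2, Complex.exp_zero, add_comm]
  rw [h, norm_mul, Complex.norm_exp_ofReal_mul_I, one_mul, ← Complex.ofReal_cos]
  have h3 : (2 : ℂ) * ((Real.cos (θ / 2) : ℝ) : ℂ) = ((2 * Real.cos (θ / 2) : ℝ) : ℂ) := by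
    push_cast; ring
  rw [h3, Complex.norm_real, Real.norm_eq_abs, abs_mul, abs_two]

/-- Quantitative equidistribution of binomial coefficients mod M. -/
theorem binomial_residue_bound (M : ℕ) (hM : 2 ≤ M) (r : ℕ) (hr : r < M) (n : ℕ) (hn : 1 ≤ n) :
    |(∑ k ∈ Finset.range (n + 1), if k % M = r then ((n.choose k : ℝ)) else 0) / 2 ^ n
        - 1 / M| ≤ (((M : ℝ) - 1) / M) * (Real.cos (Real.pi / M)) ^ n := by
  have hMne : M ≠ 0 := by omega
  have hMposR : (0 : ℝ) < M := by exact_mod_cast Nat.pos_of_ne_zero hMne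
  have hM2R : (2 : ℝ) ≤ M := by exact_mod_cast hM
  set α : ℝ := Real.cos (Real.pi / M) with hα
  have hαnn : 0 ≤ α := by
    apply Real.cos_nonneg_of_mem_Icc
    constructor
    · have : 0 < Real.pi / M := by positivity
      linarith [Real.pi_pos]
    · rw [div_le_div_iff₀ hMposR two_pos]
      nlinarith [Real.pi_pos]
  set ω : ℂ := Complex.exp (2 * Real.pi * Complex.I / M) with hω
  have hprim : IsPrimitiveRoot ω M := Complex.isPrimitiveRoot_exp M hMne
  have hωM : ω ^ M = 1 := hprim.pow_eq_one
  -- roots of unity filter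
  have hfilter : ∀ m : ℕ, ∑ j ∈ Finset.range M, ω ^ (j * m)
      = if M ∣ m then (M : ℂ) else 0 := by
    intro m
    by_cases hd : M ∣ m
    · have h1 : ω ^ m = 1 := (hprim.pow_eq_one_iff_dvd m).mpr hd
      have h2 : ∀ j ∈ Finset.range M, ω ^ (j * m) = 1 := by
        intro j _
        rw [mul_comm, pow_mul, h1, one_pow]
      rw [Finset.sum_congr rfl h2]
      simp [hd]
    · have h1 : ω ^ m ≠ 1 := fun h => hd ((hprim.pow_eq_one_iff_dvd m).mp h)
      have h2 : ∑ j ∈ Finset.range M, ω ^ (j * m) = ∑ j ∈ Finset.range M, (ω ^ m) ^ j := by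
        refine Finset.sum_congr rfl fun j _ => ?_
        rw [← pow_mul, mul_comm]
      rw [h2, geom_sum_eq h1, ← pow_mul, mul_comm m M, pow_mul, hωM, one_pow, sub_self,
        zero_div, if_neg hd]
  set S : ℝ := ∑ k ∈ Finset.range (n + 1), if k % M = r then ((n.choose k : ℝ)) else 0 with hS
  -- divisibility criterion
  have hdvd : ∀ k : ℕ, (M ∣ (M - r) + k) ↔ k % M = r := by
    intro k
    have hMr : M - r + r = M := by omega
    constructor
    · intro h
      have h0 : (M - r) + k ≡ 0 [MOD M] := Nat.modEq_zero_iff_dvd.mpr h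
      have hM0 : (M - r) + r ≡ 0 [MOD M] := by
        rw [hMr]; exact Nat.modEq_zero_iff_dvd.mpr dvd_rfl
      have h1 : (M - r) + k ≡ (M - r) + r [MOD M] := h0.trans hM0.symm
      have h2 : k ≡ r [MOD M] := Nat.ModEq.add_left_cancel' _ h1
      rw [Nat.ModEq, Nat.mod_eq_of_lt hr] at h2
      exact h2
    · intro h
      have h2 : k ≡ r [MOD M] := by rw [Nat.ModEq, Nat.mod_eq_of_lt hr]; exact h
      have h1 : (M - r) + k ≡ (M - r) + r [MOD M] := Nat.ModEq.add_left _ h2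
      rw [hMr] at h1
      exact Nat.modEq_zero_iff_dvd.mp
        (h1.trans (Nat.modEq_zero_iff_dvd.mpr dvd_rfl))
  -- binomial expansion
  have expand : ∀ j : ℕ, (1 + ω ^ j) ^ n
      = ∑ k ∈ Finset.range (n + 1), ω ^ (j * k) * (n.choose k : ℂ) := by
    intro j
    rw [add_comm, add_pow]
    refine Finset.sum_congr rfl fun k _ => ?_
    rw [one_pow, mul_one, ← pow_mul]
  -- key identity
  have key : (M : ℂ) * (S : ℂ)
      = ∑ j ∈ Finset.range M, ω ^ (j * (M - r)) * (1 + ω ^ j) ^ n := by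
    symm
    calc ∑ j ∈ Finset.range M, ω ^ (j * (M - r)) * (1 + ω ^ j) ^ n
        = ∑ j ∈ Finset.range M, ∑ k ∈ Finset.range (n + 1),
            ω ^ (j * ((M - r) + k)) * (n.choose k : ℂ) := by
          refine Finset.sum_congr rfl fun j _ => ?_
          rw [expand j, Finset.mul_sum]
          refine Finset.sum_congr rfl fun k _ => ?_
          rw [← mul_assoc, ← pow_add, ← mul_add]
      _ = ∑ k ∈ Finset.range (n + 1), ∑ j ∈ Finset.range M,
            ω ^ (j * ((M - r) + k)) * (n.choose k : ℂ) := Finset.sum_comm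
      _ = ∑ k ∈ Finset.range (n + 1),
            (if M ∣ (M - r) + k then (M : ℂ) else 0) * (n.choose k : ℂ) := by
          refine Finset.sum_congr rfl fun k _ => ?_
          rw [← Finset.sum_mul, hfilter]
      _ = (M : ℂ) * (S : ℂ) := by
          rw [hS]
          push_cast
          rw [Finset.mul_sum]
          refine Finset.sum_congr rfl fun k _ => ?_
          simp only [hdvd k]
          split_ifs <;> push_cast <;> ring
  -- split off the j = 0 term
  set T : ℂ := ∑ j ∈ (Finset.range M).erase 0, ω ^ (j * (M - r)) * (1 + ω ^ j) ^ n with hT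
  have hsplit : (M : ℂ) * (S : ℂ) = 2 ^ n + T := by
    rw [key, ← Finset.add_sum_erase _ _ (Finset.mem_range.mpr (by omega : 0 < M))]
    norm_num
    exact hT.symm
  -- bound each term of T
  have hbound : ∀ j ∈ (Finset.range M).erase 0,
      ‖ω ^ (j * (M - r)) * (1 + ω ^ j) ^ n‖ ≤ (2 * α) ^ n := by
    intro j hj
    have hj0 : j ≠ 0 := Finset.ne_of_mem_erase hj
    have hjM : j < M := Finset.mem_range.mp (Finset.mem_of_mem_erase hj)
    have hj1R : (1 : ℝ) ≤ j := by exact_mod_cast Nat.one_le_iff_ne_zero.mpr hj0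
    have hjMR : (j : ℝ) ≤ (M : ℝ) - 1 := by
      have : (j : ℝ) + 1 ≤ M := by exact_mod_cast hjM
      linarith
    have hωabs : ‖ω‖ = 1 := by
      have h4 : (2 * (Real.pi : ℂ) * Complex.I / M) = ((2 * Real.pi / M : ℝ) : ℂ) * Complex.I := by
        push_cast
        field_simp
      rw [hω, h4, Complex.norm_exp_ofReal_mul_I]
    have hωj : ω ^ j = Complex.exp (((2 * Real.pi * j / M : ℝ) : ℂ) * Complex.I) := by
      rw [hω, ← Complex.exp_nat_mul]
      congr 1
      push_cast
      field_simp
    have habs1 : ‖1 + ω ^ j‖ = 2 * |Real.cos (Real.pi * j / M)| := by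
      rw [hωj, abs_one_add_exp_aux]
      congr 2
      ring
    have hcos : |Real.cos (Real.pi * j / M)| ≤ α := by
      have hπM : 0 < Real.pi / M := by positivity
      have hx1 : Real.pi / M ≤ Real.pi * j / M := by
        rw [div_le_div_iff₀ hMposR hMposR]
        nlinarith [mul_nonneg (mul_nonneg (sub_nonneg.mpr hj1R) Real.pi_pos.le) hMposR.le]
      have hx2 : Real.pi * j / M ≤ Real.pi - Real.pi / M := by
        have heq : Real.pi - Real.pi / M = Real.pi * ((M : ℝ) - 1) / M := by
          field_simp
        rw [heq, div_le_div_iff₀ hMposR hMposR]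
        nlinarith [mul_nonneg (mul_nonneg (sub_nonneg.mpr hjMR) Real.pi_pos.le) hMposR.le]
      have hxπ : Real.pi * j / M ≤ Real.pi := by linarith
      have hx0 : 0 ≤ Real.pi * j / M := by positivity
      rw [abs_le]
      constructor
      · have := Real.cos_le_cos_of_nonneg_of_le_pi hx0 (by linarith [Real.pi_pos] :
          Real.pi - Real.pi / M ≤ Real.pi) hx2
        rw [Real.cos_pi_sub] at this
        linarith
      · exact Real.cos_le_cos_of_nonneg_of_le_pi (le_of_lt hπM) hxπ hx1
    rw [norm_mul, norm_pow, norm_pow, hωabs, one_pow, one_mul, habs1]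
    apply pow_le_pow_left₀ (by positivity)
    linarith
  -- bound on T
  have hTbound : ‖T‖ ≤ ((M : ℝ) - 1) * (2 * α) ^ n := by
    have hcard : ((Finset.range M).erase 0).card = M - 1 := by
      rw [Finset.card_erase_of_mem (Finset.mem_range.mpr (by omega)), Finset.card_range]
    calc ‖T‖ ≤ ∑ j ∈ (Finset.range M).erase 0,
          ‖ω ^ (j * (M - r)) * (1 + ω ^ j) ^ n‖ := by
          rw [hT]; exact norm_sum_le _ _
      _ ≤ ∑ _j ∈ (Finset.range M).erase 0, (2 * α) ^ n := Finset.sum_le_sum hbound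
      _ = ((M : ℝ) - 1) * (2 * α) ^ n := by
          rw [Finset.sum_const, hcard, nsmul_eq_mul]
          congr 1
          push_cast [Nat.cast_sub (by omega : 1 ≤ M)]
          ring
  -- back to the reals
  have hreal : |(M : ℝ) * S - 2 ^ n| ≤ ((M : ℝ) - 1) * (2 * α) ^ n := by
    have hcast : (((M : ℝ) * S - 2 ^ n : ℝ) : ℂ) = T := by
      push_cast
      linear_combination hsplit
    calc |(M : ℝ) * S - 2 ^ n|
        = ‖((((M : ℝ) * S - 2 ^ n : ℝ)) : ℂ)‖ := by rw [Complex.norm_real, Real.norm_eq_abs]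
      _ = ‖T‖ := by rw [hcast]
      _ ≤ ((M : ℝ) - 1) * (2 * α) ^ n := hTbound
  -- finish
  have h2n : (0 : ℝ) < 2 ^ n := by positivity
  have hrw : S / 2 ^ n - 1 / M = ((M : ℝ) * S - 2 ^ n) / ((M : ℝ) * 2 ^ n) := by
    field_simp
  rw [hrw, abs_div, abs_of_pos (by positivity : (0 : ℝ) < (M : ℝ) * 2 ^ n)]
  calc |(M : ℝ) * S - 2 ^ n| / ((M : ℝ) * 2 ^ n)
      ≤ (((M : ℝ) - 1) * (2 * α) ^ n) / ((M : ℝ) * 2 ^ n) := by gcongr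
    _ = (((M : ℝ) - 1) / M) * α ^ n := by
        rw [mul_pow]
        field_simp
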